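/- There exists a constant C > 0 such that for all k ≥ 1 and h > 0 with t = kh ≤ 1, if γ = -1/12, then the discrete wave number k_h⁻ = t_h⁻/h defined by cos t_h⁻ = (4γ + 1 + t²/6 - √((1+t²/6)² + 4γt²))/(4γ) with t_h⁻ ∈ (0, π/2) satisfies |k_h⁻ - k| ≤ C k⁵ h⁴. -/

import Mathlib

set_option maxHeartbeats 1000000
open Finset Complex

theorem cos_bound6 {x : ℝ} (hx : |x| ≤ 1) :
    |Real.cos x - (1 - x ^ 2 / 2 + x ^ 4 / 24)| ≤ |x| ^ 6 * (7 / 4320) :=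
  calc
    |Real.cos x - (1 - x ^ 2 / 2 + x ^ 4 / 24)|
        = ‖Complex.cos x - (1 - (x : ℂ) ^ 2 / 2 + (x : ℂ) ^ 4 / 24)‖ := by
      rw [← Real.norm_eq_abs, ← Complex.norm_real]; simp
    _ = ‖
          (((Complex.exp (x * I) - ∑ m ∈ range 6, (x * I) ^ m / m.factorial) +
              (Complex.exp (-x * I) - ∑ m ∈ range 6, (-x * I) ^ m / m.factorial)) / 2)‖ := by
      congr 1
      rw [Complex.cos]
      simp only [sum_range_succ, range_zero, sum_empty]
      apply Complex.ext <;> simp [Nat.factorial, div_eq_mul_inv, normSq, pow_succ] <;> ring_nf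
    _ ≤ ‖(Complex.exp (x * I) - ∑ m ∈ range 6, (x * I) ^ m / m.factorial) / 2‖ +
          ‖(Complex.exp (-x * I) - ∑ m ∈ range 6, (-x * I) ^ m / m.factorial) / 2‖ := by
      rw [add_div]; exact norm_add_le _ _
    _ = ‖Complex.exp (x * I) - ∑ m ∈ range 6, (x * I) ^ m / m.factorial‖ / 2 +
          ‖Complex.exp (-x * I) - ∑ m ∈ range 6, (-x * I) ^ m / m.factorial‖ / 2 := by
      simp [norm_div]
    _ ≤ ‖(x : ℂ) * I‖ ^ 6 * (Nat.succ 6 * ((Nat.factorial 6) * (6 : ℕ) : ℝ)⁻¹) / 2 +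
          ‖-(x : ℂ) * I‖ ^ 6 * (Nat.succ 6 * ((Nat.factorial 6) * (6 : ℕ) : ℝ)⁻¹) / 2 := by
      gcongr
      · exact Complex.exp_bound (by simpa) (by decide)
      · exact Complex.exp_bound (by simpa) (by decide)
    _ ≤ |x| ^ 6 * (7 / 4320) := by norm_num [Nat.factorial]

theorem phase_error_special_parameter :
    ∃ C : ℝ, 0 < C ∧ ∀ k h γ th : ℝ, 1 ≤ k → 0 < h → k*h ≤ 1 →
      γ = -1/12 →
      th ∈ Set.Ioo 0 (Real.pi/2) →
      Real.cos th = (4*γ + 1 + (k*h)^2/6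
          - Real.sqrt ((1 + (k*h)^2/6)^2 + 4*γ*(k*h)^2)) / (4*γ) →
      |th/h - k| ≤ C * k^5 * h^4 := by
  refine ⟨1, one_pos, fun k h γ th hk hh ht1 hγ hth hcos => ?_⟩
  subst hγ
  obtain ⟨hth0, hth2⟩ := hth
  have ht0 : 0 < k * h := by positivity
  set t : ℝ := k * h with htdef
  clear_value t
  have hpi : (3.141592 : ℝ) < Real.pi := Real.pi_gt_d6
  have hpi' : Real.pi < 3.15 := Real.pi_lt_d2
  -- power facts
  have h21 : t^2 ≤ 1 := pow_le_one₀ ht0.le ht1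
  have h42 : t^4 ≤ t^2 := pow_le_pow_of_le_one ht0.le ht1 (by norm_num)
  have h64 : t^6 ≤ t^4 := pow_le_pow_of_le_one ht0.le ht1 (by norm_num)
  have h86 : t^8 ≤ t^6 := pow_le_pow_of_le_one ht0.le ht1 (by norm_num)
  have h6pos : (0:ℝ) < t^6 := pow_pos ht0 6
  have h2pos : (0:ℝ) < t^2 := pow_pos ht0 2
  -- simplify the sqrt argument
  have harg : (1 + t^2/6)^2 + 4*(-1/12)*t^2 = 1 + t^4/36 := by ring
  set s : ℝ := Real.sqrt (1 + t^4/36) with hsdef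
  clear_value s
  have hcos' : Real.cos th = 3*s - 2 - t^2/2 := by
    rw [hcos, harg, ← hsdef]; ring
  -- sqrt bounds
  have hs_up : s ≤ 1 + t^4/72 := by
    rw [hsdef, show (1:ℝ)+t^4/72 = Real.sqrt ((1+t^4/72)^2) from
      (Real.sqrt_sq (by nlinarith)).symm]
    exact Real.sqrt_le_sqrt (by nlinarith)
  have hs_lo : 1 + t^4/72 - t^8/10368 ≤ s := by
    rw [hsdef, show (1:ℝ)+t^4/72-t^8/10368 = Real.sqrt ((1+t^4/72-t^8/10368)^2) from
      (Real.sqrt_sq (by nlinarith)).symm]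
    apply Real.sqrt_le_sqrt
    nlinarith [pow_pos ht0 12, pow_pos ht0 16, pow_pos ht0 8]
  -- taylor bound for cos t
  have hct := cos_bound6 (x := t) (by rw [abs_of_pos ht0]; exact ht1)
  rw [abs_of_pos ht0] at hct
  obtain ⟨hct1, hct2⟩ := abs_le.mp hct
  -- |cos th - cos t| ≤ t^6 / 500
  have hE : |Real.cos th - Real.cos t| ≤ t^6 / 500 := by
    rw [abs_le]
    constructor
    · linarith
    · linarith
  -- th ≥ t/2
  have hth_lo : t/2 ≤ th := by
    by_contra hlt
    push_neg at hlt
    have h1 : Real.cos (t/2) < Real.cos th :=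
      Real.cos_lt_cos_of_nonneg_of_le_pi hth0.le (by linarith) hlt
    have hcb := Real.cos_bound (x := t/2) (by rw [abs_of_pos (by linarith)]; linarith)
    obtain ⟨hc1, _⟩ := abs_le.mp hcb
    rw [abs_of_pos (by linarith : (0:ℝ) < t/2)] at hc1
    linarith
  -- lower bound on |cos th - cos t|
  have hsinA : 3/(2*Real.pi) * t ≤ Real.sin ((th + t)/2) := by
    have hA1 : (0:ℝ) ≤ (th + t)/2 := by linarith
    have hA2 : (th + t)/2 ≤ Real.pi/2 := by linarith
    have hms := Real.mul_le_sin hA1 hA2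
    have h34 : 3*t/4 ≤ (th + t)/2 := by linarith
    have hpos : (0:ℝ) < Real.pi := by linarith
    calc 3/(2*Real.pi) * t = 2/Real.pi * (3*t/4) := by field_simp; ring
      _ ≤ 2/Real.pi * ((th+t)/2) := mul_le_mul_of_nonneg_left h34 (by positivity)
      _ ≤ Real.sin ((th+t)/2) := hms
  have hsinB : |th - t| / Real.pi ≤ |Real.sin ((th - t)/2)| := by
    have hpos : (0:ℝ) < Real.pi := by linarith
    rcases le_or_gt 0 ((th - t)/2) with hB0 | hB0
    · have hB : (th - t)/2 ≤ Real.pi/2 := by linarith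
      have hms := Real.mul_le_sin hB0 hB
      have hs0 : 0 ≤ Real.sin ((th - t)/2) :=
        le_trans (by positivity) hms
      rw [_root_.abs_of_nonneg hs0, _root_.abs_of_nonneg (by linarith : (0:ℝ) ≤ th - t)]
      calc (th - t)/Real.pi = 2/Real.pi * ((th-t)/2) := by field_simp
        _ ≤ _ := hms
    · have hB0' : (0:ℝ) ≤ -((th - t)/2) := by linarith
      have hB' : -((th - t)/2) ≤ Real.pi/2 := by linarith
      have hms := Real.mul_le_sin hB0' hB'
      rw [Real.sin_neg] at hms
      have hs0 : Real.sin ((th - t)/2) ≤ 0 := by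
        have hp2 : 0 ≤ 2/Real.pi * -((th - t)/2) := by positivity
        linarith
      rw [abs_of_nonpos hs0, abs_of_nonpos (by linarith : th - t ≤ 0)]
      calc -(th - t)/Real.pi = 2/Real.pi * (-((th-t)/2)) := by field_simp
        _ ≤ -Real.sin ((th - t)/2) := hms
  have hkey : 3/Real.pi^2 * t * |th - t| ≤ |Real.cos th - Real.cos t| := by
    rw [Real.cos_sub_cos, abs_mul, abs_mul]
    have hpos : (0:ℝ) < Real.pi := by linarith
    have hsA0 : 0 ≤ Real.sin ((th + t)/2) := le_trans (by positivity) hsinA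
    rw [_root_.abs_of_nonneg hsA0, show |(-2:ℝ)| = 2 by norm_num]
    calc 3/Real.pi^2 * t * |th - t|
        = 2 * (3/(2*Real.pi) * t) * (|th - t|/Real.pi) := by field_simp
      _ ≤ 2 * Real.sin ((th + t)/2) * |Real.sin ((th - t)/2)| := by
          apply mul_le_mul (by nlinarith [abs_nonneg (th - t)]) hsinB (by positivity)
          positivity
  -- combine
  have hpos : (0:ℝ) < Real.pi := by linarith
  have hq : 3/10 ≤ 3/Real.pi^2 := by
    rw [div_le_div_iff₀ (by norm_num) (by positivity)]
    nlinarith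
  have h3 : t * |th - t| ≤ t^6 / 150 := by
    have hm := mul_le_mul_of_nonneg_right hq (mul_nonneg ht0.le (abs_nonneg (th - t)))
    have h1 : 3/Real.pi^2 * t * |th - t| ≤ t^6/500 := le_trans hkey hE
    nlinarith
  have hfinal : |th - t| ≤ t^5 := by
    nlinarith [abs_nonneg (th - t), pow_pos ht0 5, pow_pos ht0 6]
  have heq : th/h - k = (th - t)/h := by rw [htdef]; field_simp
  rw [heq, abs_div, abs_of_pos hh, div_le_iff₀ hh]
  calc |th - t| ≤ t^5 := hfinal
    _ = 1 * k^5 * h^4 * h := by rw [htdef]; ring
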